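/- Let α be a real number with 0 ≤ α < 2/3 and let n ≥ 25 be an integer. Then λ_α(K_2 ∨ (K_{n−4} ∪ 2K_1)) < n − 2. -/

import Mathlib

open SimpleGraph

/-- The `Aα`-matrix of a finite simple graph: `Aα(G) = α·D(G) + (1-α)·A(G)`. -/
noncomputable def aAlphaMatrix {V : Type*} [Finite V] (α : ℝ) (G : SimpleGraph V) :
    Matrix V V ℝ :=
  letI := Fintype.ofFinite V
  letI := Classical.decEq V
  letI : DecidableRel G.Adj := Classical.decRel _
  α • Matrix.diagonal (fun v => (G.degree v : ℝ)) + (1 - α) • (G.adjMatrix ℝ)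

/-- The `Aα`-spectral radius: the largest eigenvalue of `Aα(G)` (the supremum of its real
spectrum; all eigenvalues of this symmetric matrix are real). -/
noncomputable def lambdaAlpha {V : Type*} [Finite V] (α : ℝ) (G : SimpleGraph V) : ℝ :=
  letI := Fintype.ofFinite V
  letI := Classical.decEq V
  sSup (spectrum ℝ (aAlphaMatrix α G))

/-- The join `G ∨ H` of two graphs on disjoint vertex sets. -/
def graphJoin {V W : Type*} (G : SimpleGraph V) (H : SimpleGraph W) : SimpleGraph (V ⊕ W) where
  Adj x y :=
    match x, y with
    | Sum.inl a, Sum.inl b => G.Adj a b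
    | Sum.inr a, Sum.inr b => H.Adj a b
    | Sum.inl _, Sum.inr _ => True
    | Sum.inr _, Sum.inl _ => True
  symm := by
    refine ⟨?_⟩
    rintro (a | a) (b | b) h
    · exact G.adj_symm h
    · trivial
    · trivial
    · exact H.adj_symm h
  loopless := by
    refine ⟨?_⟩
    rintro (a | a) h
    · exact G.ne_of_adj h rfl
    · exact H.ne_of_adj h rfl

/-- `G` has an `H`-factor where `H` consists of the paths `P_k` for `k ∈ ks`: a spanning
subgraph all of whose connected components are paths `P_k` with `k ∈ ks`. -/
def HasPathFactor {V : Type*} (G : SimpleGraph V) (ks : Set ℕ) : Prop :=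
  ∃ F : SimpleGraph V, F ≤ G ∧
    ∀ c : F.ConnectedComponent, ∃ k ∈ ks, Nonempty ((F.induce c.supp) ≃g pathGraph k)

/-- `K_1 ∨ (K_{n-2} ∪ K_1)`. -/
def specialGraph (n : ℕ) : SimpleGraph (Fin 1 ⊕ (Fin (n - 2) ⊕ Fin 1)) :=
  graphJoin (⊤ : SimpleGraph (Fin 1))
    ((⊤ : SimpleGraph (Fin (n - 2))) ⊕g (⊤ : SimpleGraph (Fin 1)))

open Finset in
lemma spec_le_weight {V : Type*} [Fintype V] [DecidableEq V] (M : Matrix V V ℝ)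
    (hM : ∀ i j, 0 ≤ M i j) (w : V → ℝ) (hw : ∀ i, 0 < w i) (c : ℝ)
    (hrow : ∀ i, (∑ j, M i j * w j) ≤ c * w i) (μ : ℝ) (hμ : μ ∈ spectrum ℝ M) :
    μ ≤ c := by
  rw [spectrum.mem_iff] at hμ
  rw [Matrix.isUnit_iff_isUnit_det, isUnit_iff_ne_zero, not_not] at hμ
  obtain ⟨x, hx0, hx⟩ := (Matrix.exists_mulVec_eq_zero_iff).2 hμ
  have hMx : ∀ i, ∑ j, M i j * x j = μ * x i := by
    intro i
    rw [Matrix.sub_mulVec, Matrix.algebraMap_eq_diagonal] at hx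
    have := congrFun hx i
    simp only [Pi.sub_apply, Matrix.mulVec_diagonal, Pi.zero_apply, Pi.algebraMap_apply,
      Algebra.algebraMap_self_apply, sub_eq_zero, Matrix.mulVec, dotProduct,
      Matrix.diagonal_apply, ite_mul, zero_mul, Finset.sum_ite_eq, Finset.mem_univ,
      if_true] at this
    linarith [this]
  obtain ⟨j0, hj0⟩ := Function.ne_iff.mp hx0
  obtain ⟨i, -, hi⟩ := Finset.exists_max_image Finset.univ (fun j => |x j| / w j)
    ⟨j0, Finset.mem_univ _⟩
  have h2 : 0 < |x i| / w i :=
    lt_of_lt_of_le (div_pos (abs_pos.mpr (by simpa using hj0)) (hw j0)) (hi j0 (Finset.mem_univ _))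
  have hxi : 0 < |x i| :=
    lt_of_le_of_ne (abs_nonneg _) (fun h => by simp [← h] at h2)
  have hxj : ∀ j, |x j| ≤ w j * (|x i| / w i) := by
    intro j
    have := hi j (Finset.mem_univ _)
    rw [div_le_div_iff₀ (hw j) (hw i)] at this
    rw [← mul_div_assoc, le_div_iff₀ (hw i)]
    linarith [this]
  have key : |μ| * |x i| ≤ c * |x i| := by
    calc |μ| * |x i| = |μ * x i| := (abs_mul μ (x i)).symm
    _ = |∑ j, M i j * x j| := by rw [hMx i]
    _ ≤ ∑ j, |M i j * x j| := Finset.abs_sum_le_sum_abs _ _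
    _ = ∑ j, M i j * |x j| := by
        refine Finset.sum_congr rfl fun j _ => ?_
        rw [abs_mul, abs_of_nonneg (hM i j)]
    _ ≤ ∑ j, M i j * (w j * (|x i| / w i)) :=
        Finset.sum_le_sum fun j _ => mul_le_mul_of_nonneg_left (hxj j) (hM i j)
    _ = (∑ j, M i j * w j) * (|x i| / w i) := by
        rw [Finset.sum_mul]; exact Finset.sum_congr rfl fun j _ => by ring
    _ ≤ (c * w i) * (|x i| / w i) :=
        mul_le_mul_of_nonneg_right (hrow i) (le_of_lt h2)
    _ = c * (w i * (|x i| / w i)) := by ring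
    _ = c * |x i| := by rw [mul_div_cancel₀ _ (ne_of_gt (hw i))]
  calc μ ≤ |μ| := le_abs_self μ
  _ ≤ c := le_of_mul_le_mul_right key hxi

lemma lambdaAlpha_eq {V : Type*} [Fintype V] [DecidableEq V] (α : ℝ) (G : SimpleGraph V)
    [inst : DecidableRel G.Adj] :
    lambdaAlpha α G =
      sSup (spectrum ℝ
        (α • Matrix.diagonal (fun v => (G.degree v : ℝ)) + (1 - α) • G.adjMatrix ℝ)) := by
  unfold lambdaAlpha aAlphaMatrix
  congr!

open Finset in
lemma sum_ite_ne_fin {m : ℕ} (b : Fin m) (c : ℝ) :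
    ∑ b' : Fin m, (if b ≠ b' then c else 0) = ((m : ℝ) - 1) * c := by
  have h : ∀ b' : Fin m, (if b ≠ b' then c else 0) = c - (if b = b' then c else 0) := by
    intro b'; by_cases h : b = b' <;> simp [h]
  rw [Finset.sum_congr rfl fun b' _ => h b', Finset.sum_sub_distrib, Finset.sum_const,
    Finset.sum_ite_eq, if_pos (Finset.mem_univ b)]
  simp [Finset.card_univ]
  ring


/-- For `0 ≤ α < 2/3` and every integer `n ≥ 25`, `λ_α(K_2 ∨ (K_{n−4} ∪ 2K_1)) < n − 2`. -/
theorem lambdaAlpha_K2_join_lt (α : ℝ) (hα0 : 0 ≤ α) (hα1 : α < 2 / 3)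
    (n : ℕ) (hn : 25 ≤ n) :
    lambdaAlpha α (graphJoin (⊤ : SimpleGraph (Fin 2))
        ((⊤ : SimpleGraph (Fin (n - 4))) ⊕g (⊥ : SimpleGraph (Fin 2)))) <
      (n : ℝ) - 2 := by
  classical
  set G := graphJoin (⊤ : SimpleGraph (Fin 2))
      ((⊤ : SimpleGraph (Fin (n - 4))) ⊕g (⊥ : SimpleGraph (Fin 2))) with hG
  letI : DecidableRel G.Adj := Classical.decRel _
  rw [lambdaAlpha_eq]
  set M : Matrix (Fin 2 ⊕ (Fin (n - 4) ⊕ Fin 2)) (Fin 2 ⊕ (Fin (n - 4) ⊕ Fin 2)) ℝ :=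
    α • Matrix.diagonal (fun v => (G.degree v : ℝ)) + (1 - α) • G.adjMatrix ℝ with hM
  have hn4 : ((n - 4 : ℕ) : ℝ) = (n : ℝ) - 4 := by
    have h4 : 4 ≤ n := by omega
    push_cast [h4]; ring
  have hnR : (25 : ℝ) ≤ (n : ℝ) := by exact_mod_cast hn
  -- adjacency facts
  have e1 : ∀ a b : Fin 2, G.Adj (Sum.inl a) (Sum.inl b) ↔ a ≠ b := by
    rw [hG]; exact fun _ _ => Iff.rfl
  have e2 : ∀ (a : Fin 2) (x : Fin (n-4) ⊕ Fin 2),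
      G.Adj (Sum.inl a) (Sum.inr x) ↔ True := by
    rw [hG]; exact fun _ _ => Iff.rfl
  have e3 : ∀ b b' : Fin (n-4),
      G.Adj (Sum.inr (Sum.inl b)) (Sum.inr (Sum.inl b')) ↔ b ≠ b' := by
    rw [hG]; exact fun _ _ => Iff.rfl
  have e4 : ∀ (b : Fin (n-4)) (d : Fin 2),
      G.Adj (Sum.inr (Sum.inl b)) (Sum.inr (Sum.inr d)) ↔ False := by
    rw [hG]
    exact fun b d => iff_false_intro (fun h => Bool.false_ne_true h)
  have e5 : ∀ (x : Fin (n-4) ⊕ Fin 2) (a : Fin 2),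
      G.Adj (Sum.inr x) (Sum.inl a) ↔ True := by
    rw [hG]; exact fun _ _ => Iff.rfl
  have e6 : ∀ (d : Fin 2) (b : Fin (n-4)),
      G.Adj (Sum.inr (Sum.inr d)) (Sum.inr (Sum.inl b)) ↔ False := by
    rw [hG]
    exact fun d b => iff_false_intro (fun h => Bool.false_ne_true h)
  have e7 : ∀ d d' : Fin 2,
      G.Adj (Sum.inr (Sum.inr d)) (Sum.inr (Sum.inr d')) ↔ False := by
    rw [hG]
    exact fun d d' => iff_false_intro (fun h => h)
  -- degree as a sum
  have hdeg : ∀ v, ((G.degree v : ℝ)) = ∑ j, (if G.Adj v j then (1:ℝ) else 0) := by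
    intro v
    rw [Finset.sum_boole]
    norm_cast
    rw [← SimpleGraph.card_neighborFinset_eq_degree, SimpleGraph.neighborFinset_eq_filter]
  -- the weights
  set w : (Fin 2 ⊕ (Fin (n - 4) ⊕ Fin 2)) → ℝ :=
    Sum.elim (fun _ => (5:ℝ)/4) (fun _ => (1:ℝ)) with hw_def
  have hw : ∀ i, 0 < w i := by rintro (a | x) <;> norm_num [hw_def]
  -- matrix entries
  have hM_apply : ∀ i j, M i j
      = α * (if i = j then (G.degree i : ℝ) else 0)
        + (1 - α) * (if G.Adj i j then 1 else 0) := by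
    intro i j
    simp [hM, Matrix.add_apply, Matrix.smul_apply, Matrix.diagonal_apply, smul_eq_mul]
  have hMnn : ∀ i j, 0 ≤ M i j := by
    intro i j
    rw [hM_apply]
    have h1 : (0:ℝ) ≤ (if i = j then (G.degree i : ℝ) else 0) := by positivity
    have h2 : (0:ℝ) ≤ (if G.Adj i j then (1:ℝ) else 0) := by positivity
    nlinarith
  -- degree computations
  have hdeg1 : ∀ a : Fin 2, ((G.degree (Sum.inl a) : ℝ)) = (n : ℝ) - 1 := by
    intro a
    rw [hdeg, Fintype.sum_sum_type, Fintype.sum_sum_type]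
    simp only [e1, e2, if_true]
    rw [sum_ite_ne_fin a 1]
    simp [hn4]
    ring
  have hdeg2 : ∀ b : Fin (n-4), ((G.degree (Sum.inr (Sum.inl b)) : ℝ)) = (n : ℝ) - 3 := by
    intro b
    rw [hdeg, Fintype.sum_sum_type, Fintype.sum_sum_type]
    simp only [e3, e4, e5, if_true, if_false]
    rw [sum_ite_ne_fin b 1]
    simp [hn4]
    ring
  have hdeg3 : ∀ d : Fin 2, ((G.degree (Sum.inr (Sum.inr d)) : ℝ)) = 2 := by
    intro d
    rw [hdeg, Fintype.sum_sum_type, Fintype.sum_sum_type]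
    simp only [e5, e6, e7, if_true, if_false]
    simp
  -- row sums
  have hrow : ∀ i, (∑ j, M i j * w j) ≤ ((n:ℝ) - 5/2) * w i := by
    intro i
    have h1 : ∀ j, M i j * w j
        = α * (if i = j then (G.degree i : ℝ) * w j else 0)
          + (1 - α) * (if G.Adj i j then w j else 0) := by
      intro j
      rw [hM_apply]
      by_cases h : i = j <;> by_cases h2 : G.Adj i j <;> simp [h, h2] <;> ring
    have hsplit : ∑ j, M i j * w j
        = α * ((G.degree i : ℝ) * w i) + (1 - α) * ∑ j, (if G.Adj i j then w j else 0) := by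
      rw [Finset.sum_congr rfl (fun j _ => h1 j), Finset.sum_add_distrib,
        ← Finset.mul_sum, ← Finset.mul_sum, Finset.sum_ite_eq, if_pos (Finset.mem_univ i)]
    rw [hsplit]
    obtain (a | b | d) := i
    · -- i = inl a
      have hA : ∑ j, (if G.Adj (Sum.inl a) j then w j else 0) = (n : ℝ) - 3/4 := by
        rw [Fintype.sum_sum_type, Fintype.sum_sum_type]
        simp only [e1, e2, if_true, hw_def, Sum.elim_inl, Sum.elim_inr]
        rw [sum_ite_ne_fin a (5/4)]
        simp [hn4]
        ring
      rw [hA, hdeg1 a]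
      have hwa : w (Sum.inl a) = 5/4 := rfl
      rw [hwa]
      nlinarith [mul_nonneg (by linarith : (0:ℝ) ≤ 2/3 - α) (by linarith : (0:ℝ) ≤ (n:ℝ) - 25)]
    · -- i = inr (inl b)
      have hA : ∑ j, (if G.Adj (Sum.inr (Sum.inl b)) j then w j else 0) = (n : ℝ) - 5/2 := by
        rw [Fintype.sum_sum_type, Fintype.sum_sum_type]
        simp only [e3, e4, e5, if_true, if_false, hw_def, Sum.elim_inl, Sum.elim_inr]
        rw [sum_ite_ne_fin b 1]
        simp [hn4]
        ring
      rw [hA, hdeg2 b]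
      have hwb : w (Sum.inr (Sum.inl b)) = 1 := rfl
      rw [hwb]
      nlinarith [mul_nonneg hα0 (by norm_num : (0:ℝ) ≤ 1/2)]
    · -- i = inr (inr d)
      have hA : ∑ j, (if G.Adj (Sum.inr (Sum.inr d)) j then w j else 0) = 5/2 := by
        rw [Fintype.sum_sum_type, Fintype.sum_sum_type]
        simp only [e5, e6, e7, if_true, if_false, hw_def, Sum.elim_inl, Sum.elim_inr]
        simp
        norm_num
      rw [hA, hdeg3 d]
      have hwd : w (Sum.inr (Sum.inr d)) = 1 := rfl
      rw [hwd]
      nlinarith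
  have hle : sSup (spectrum ℝ M) ≤ (n:ℝ) - 5/2 := by
    apply Real.sSup_le
    · intro μ hμ
      exact spec_le_weight M hMnn w hw _ hrow μ hμ
    · linarith
  linarith
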